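/- arXiv:2308.07920 — 6 statements merged into one kernel-verified Lean document; each statement's English description precedes it below -/
import Mathlib

section
/- Let d ≥ 2 and m ≥ 1 be integers. Let C ⊆ B_m be a nonempty connected set with C ∩ ∂B_m ≠ ∅, and let S be a connected component of B_m ∖ C with S ∩ ∂B_m ≠ ∅. Then ∂_{B_m} S ∩ ∂B_m ≠ ∅, where ∂_{B_m} S = {x ∈ B_m ∖ S : ∃ y ∈ S with y ∼ x} is the relative boundary of S in B_m. -/
/-- Nearest-neighbor adjacency on `ℤ^d`: Euclidean distance one. -/
def nnAdj {d : ℕ} (x y : Fin d → ℤ) : Prop := ∑ i, (x i - y i) ^ 2 = 1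

/-- The box `B_m = ([-m,m] ∩ ℤ)^d`. -/
def latBox (d m : ℕ) : Set (Fin d → ℤ) := {x | ∀ i, |x i| ≤ (m : ℤ)}

/-- The inner boundary `∂B_m = {x ∈ B_m : |x|_∞ = m}`. -/
def latSphere (d m : ℕ) : Set (Fin d → ℤ) :=
  {x | (∀ i, |x i| ≤ (m : ℤ)) ∧ ∃ i, |x i| = (m : ℤ)}

/-- `x` and `y` are joined by a nearest-neighbor path lying in `A`. -/
def LatJoined {d : ℕ} (A : Set (Fin d → ℤ)) (x y : Fin d → ℤ) : Prop :=
  ∃ l : List (Fin d → ℤ), l.Chain' nnAdj ∧ l.head? = some x ∧ l.getLast? = some y ∧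
    ∀ z ∈ l, z ∈ A

/-- A set is connected if any two of its points are joined by a path inside it. -/
def LatConn {d : ℕ} (A : Set (Fin d → ℤ)) : Prop := ∀ x ∈ A, ∀ y ∈ A, LatJoined A x y

/-- Adjacency within the sphere. -/
def sphR (d m : ℕ) (a b : Fin d → ℤ) : Prop :=
  nnAdj a b ∧ a ∈ latSphere d m ∧ b ∈ latSphere d m

lemma nnAdj_symm {d : ℕ} {x y : Fin d → ℤ} (h : nnAdj x y) : nnAdj y x := by
  unfold nnAdj at *
  rw [← h]
  exact Finset.sum_congr rfl fun i _ => by ring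

lemma nnAdj_update {d : ℕ} (x : Fin d → ℤ) (i : Fin d) (a b : ℤ) (h : (a - b) ^ 2 = 1) :
    nnAdj (Function.update x i a) (Function.update x i b) := by
  unfold nnAdj
  rw [Finset.sum_eq_single i]
  · simpa using h
  · intro j _ hj
    simp [Function.update_of_ne hj]
  · simp

lemma moveCoord (d m : ℕ) (i : Fin d) (ε : ℤ) (hε : ε ^ 2 = 1) (x : Fin d → ℤ) :
    ∀ k : ℕ, (∀ j : ℕ, j ≤ k → Function.update x i (x i + ε * j) ∈ latSphere d m) →
    Relation.ReflTransGen (sphR d m) x (Function.update x i (x i + ε * k)) := by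
  intro k
  induction k with
  | zero =>
    intro _
    have : Function.update x i (x i + ε * (0 : ℕ)) = x := by simp
    rw [this]
  | succ k ih =>
    intro h
    refine (ih fun j hj => h j (by omega)).tail ?_
    refine ⟨nnAdj_update x i _ _ ?_, h k (by omega), h (k + 1) le_rfl⟩
    push_cast
    linear_combination hε

lemma stageA (d m : ℕ) (i0 : Fin d) (s : Finset (Fin d)) :
    ∀ x : Fin d → ℤ, x ∈ latSphere d m → |x i0| = m →
    (∀ j, j ∉ s → j ≠ i0 → x j = m) →
    Relation.ReflTransGen (sphR d m) x (fun j => if j = i0 then x i0 else (m : ℤ)) := by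
  induction s using Finset.induction_on with
  | empty =>
    intro x hx hi0 hall
    have : (fun j => if j = i0 then x i0 else (m : ℤ)) = x := by
      funext j
      by_cases h : j = i0
      · simp [h]
      · simp [h, hall j (by simp) h]
    rw [this]
  | @insert a s ha ih =>
    intro x hx hi0 hall
    by_cases hca : a = i0 ∨ x a = m
    · apply ih x hx hi0
      intro j hj hji0
      by_cases hja : j = a
      · subst hja
        rcases hca with h | h
        · exact absurd h hji0
        · exact h
      · exact hall j (by simp [hja, hj]) hji0
    · push_neg at hca
      obtain ⟨hai0, hxa⟩ := hca
      have hb1 : |x a| ≤ (m : ℤ) := hx.1 a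
      have hb : -(m : ℤ) ≤ x a ∧ x a ≤ m := abs_le.1 hb1
      set k : ℕ := (m - x a).toNat with hk
      have hkk : (k : ℤ) = m - x a := Int.toNat_of_nonneg (by omega)
      have hmem : ∀ j : ℕ, j ≤ k → Function.update x a (x a + 1 * j) ∈ latSphere d m := by
        intro j hj
        have hjk : (j : ℤ) ≤ (k : ℤ) := by exact_mod_cast hj
        constructor
        · intro i
          by_cases hia : i = a
          · subst hia
            rw [Function.update_self]
            rw [abs_le]
            constructor <;> omega
          · rw [Function.update_of_ne hia]
            exact hx.1 i
        · exact ⟨i0, by rw [Function.update_of_ne (Ne.symm hai0)]; exact hi0⟩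
      have step := moveCoord d m a 1 (by ring) x k hmem
      have hupd : Function.update x a (x a + 1 * k) = Function.update x a m := by
        congr 1
        rw [hkk]; ring
      rw [hupd] at step
      set x' := Function.update x a (m : ℤ) with hx'
      have hx'sph : x' ∈ latSphere d m := by
        have := hmem k le_rfl
        rwa [show x a + 1 * (k : ℤ) = (m : ℤ) by rw [hkk]; ring] at this
      have hx'i0 : x' i0 = x i0 := Function.update_of_ne (Ne.symm hai0) _ _
      have h2 := ih x' hx'sph (by rw [hx'i0]; exact hi0) ?_
      · have : (fun j => if j = i0 then x' i0 else (m : ℤ)) =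
            (fun j => if j = i0 then x i0 else (m : ℤ)) := by
          rw [hx'i0]
        rw [this] at h2
        exact step.trans h2
      · intro j hj hji0
        by_cases hja : j = a
        · subst hja
          exact Function.update_self _ _ _
        · rw [hx', Function.update_of_ne hja]
          exact hall j (by simp [hja, hj]) hji0

lemma toCorner (d m : ℕ) (hd : 2 ≤ d) (x : Fin d → ℤ) (hx : x ∈ latSphere d m) :
    Relation.ReflTransGen (sphR d m) x (fun _ => (m : ℤ)) := by
  obtain ⟨hbd, i0, hi0⟩ := hx
  have hxs : x ∈ latSphere d m := ⟨hbd, i0, hi0⟩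
  have h1 := stageA d m i0 Finset.univ x hxs hi0 (by simp)
  set y : Fin d → ℤ := fun j => if j = i0 then x i0 else (m : ℤ) with hy
  have hyi0 : y i0 = x i0 := by simp [hy]
  have hysph : y ∈ latSphere d m := by
    constructor
    · intro j
      by_cases hj : j = i0
      · simp [hy, hj, hbd i0]
      · simp [hy, hj]
    · exact ⟨i0, by rw [hyi0]; exact hi0⟩
  rcases (abs_eq (by positivity)).1 hi0 with h | h
  · have : y = fun _ => (m : ℤ) := by
      funext j
      by_cases hj : j = i0 <;> simp [hy, hj, h]
    rwa [this] at h1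
  · haveI : Nontrivial (Fin d) := Fin.nontrivial_iff_two_le.2 hd
    obtain ⟨j0, hj0⟩ := exists_ne i0
    have hmem : ∀ j : ℕ, j ≤ 2 * m → Function.update y i0 (y i0 + 1 * j) ∈ latSphere d m := by
      intro j hj
      have hjz : (j : ℤ) ≤ 2 * m := by exact_mod_cast hj
      constructor
      · intro i
        by_cases hi : i = i0
        · subst hi
          rw [Function.update_self, abs_le, hyi0, h]
          constructor <;> omega
        · rw [Function.update_of_ne hi]
          exact hysph.1 i
      · refine ⟨j0, ?_⟩
        rw [Function.update_of_ne hj0]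
        simp [hy, hj0, abs_of_nonneg (by positivity : (0:ℤ) ≤ (m:ℤ))]
    have step := moveCoord d m i0 1 (by ring) y (2 * m) hmem
    have : Function.update y i0 (y i0 + 1 * ((2 * m : ℕ) : ℤ)) = fun _ => (m : ℤ) := by
      funext j
      by_cases hj : j = i0
      · subst hj
        rw [Function.update_self, hyi0, h]
        push_cast
        ring
      · rw [Function.update_of_ne hj]
        simp [hy, hj]
    rw [this] at step
    exact h1.trans step

lemma crossing {α : Type*} {R : α → α → Prop} {P : α → Prop} {a b : α}
    (h : Relation.ReflTransGen R a b) (hb : ¬ P b) :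
    P a → ∃ u v, R u v ∧ P u ∧ ¬ P v := by
  induction h using Relation.ReflTransGen.head_induction_on with
  | refl => exact fun ha => absurd ha hb
  | @head a' c hR _ ih =>
    intro ha
    by_cases hc : P c
    · exact ih hc
    · exact ⟨a', c, hR, ha, hc⟩

/-- if `C ⊆ B_m` is nonempty, connected and meets `∂B_m`, and `S` is a
connected component of `B_m \ C` meeting `∂B_m`, then the relative boundary
`∂_{B_m} S` meets `∂B_m`. -/
theorem relative_boundary_meets_sphere (d m : ℕ) (hd : 2 ≤ d) (hm : 1 ≤ m)
    (C S : Set (Fin d → ℤ))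
    (hCsub : C ⊆ latBox d m) (hCne : C.Nonempty) (hCconn : LatConn C)
    (hCbd : (C ∩ latSphere d m).Nonempty)
    (hSsub : S ⊆ latBox d m \ C) (hSne : S.Nonempty) (hSconn : LatConn S)
    (hSmax : ∀ S' : Set (Fin d → ℤ), S ⊆ S' → S' ⊆ latBox d m \ C → LatConn S' → S' = S)
    (hSbd : (S ∩ latSphere d m).Nonempty) :
    ({x ∈ latBox d m \ S | ∃ y ∈ S, nnAdj y x} ∩ latSphere d m).Nonempty := by
  obtain ⟨s, hsS, hsSph⟩ := hSbd
  obtain ⟨c, hcC, hcSph⟩ := hCbd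
  have hcS : c ∉ S := fun h => (hSsub h).2 hcC
  have hsymm : Symmetric (sphR d m) := fun a b ⟨h1, h2, h3⟩ => ⟨nnAdj_symm h1, h3, h2⟩
  have h1 := toCorner d m hd s hsSph
  have h2 := (@Relation.ReflTransGen.symmetric _ _ ⟨fun a b h => hsymm h⟩).symm _ _ (toCorner d m hd c hcSph)
  obtain ⟨u, v, ⟨huv, husph, hvsph⟩, huS, hvS⟩ := crossing (h1.trans h2) hcS hsS
  exact ⟨v, ⟨⟨fun i => hvsph.1 i, hvS⟩, u, huS, huv⟩, hvsph⟩
end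

section
/- For every ξ ∈ (1/2, 1) there is a constant C(ξ) < ∞ such that for all reals R ≥ 4 and r with C(ξ) ≤ r ≤ R/4, there exist an integer k ≥ 1 and closed subintervals I_1, …, I_k of [0, R], pairwise disjoint and ordered from left to right, such that: k ≤ 1 + R/r; d(I_1, {0}) ∈ [2r^ξ, 7r^ξ]; d(I_k, {R}) ∈ [2r^ξ, 7r^ξ]; d(I_i, I_{i+1}) = 2r^ξ for all 1 ≤ i < k; and |I_i| ∈ [r^ξ, r] for all 1 ≤ i ≤ k. -/
set_option maxHeartbeats 1000000


/-- subdivision of `[0, R]` into `k ≤ 1 + R/r` well-separated intervals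
`I_i = [a i, b i]` with lengths in `[r^ξ, r]`, consecutive gaps exactly `2r^ξ`, and
boundary gaps in `[2r^ξ, 7r^ξ]`. -/
theorem interval_subdivision (ξ : ℝ) (hξ : ξ ∈ Set.Ioo (1 / 2 : ℝ) 1) :
    ∃ C : ℝ, ∀ R r : ℝ, 4 ≤ R → C ≤ r → r ≤ R / 4 →
      ∃ (k : ℕ) (a b : ℕ → ℝ), 1 ≤ k ∧
        (∀ i < k, 0 ≤ a i ∧ a i ≤ b i ∧ b i ≤ R) ∧
        (∀ i, i + 1 < k → b i < a (i + 1)) ∧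
        (k : ℝ) ≤ 1 + R / r ∧
        a 0 ∈ Set.Icc (2 * r ^ ξ) (7 * r ^ ξ) ∧
        R - b (k - 1) ∈ Set.Icc (2 * r ^ ξ) (7 * r ^ ξ) ∧
        (∀ i, i + 1 < k → a (i + 1) - b i = 2 * r ^ ξ) ∧
        (∀ i < k, b i - a i ∈ Set.Icc (r ^ ξ) r) := by
  obtain ⟨hξ1, hξ2⟩ := hξ
  have h1ξ : (0:ℝ) < 1 - ξ := by linarith
  refine ⟨max 4 ((25/4 : ℝ) ^ (1/(1-ξ))), fun R r hR hC hRr => ?_⟩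
  have hr4 : (4:ℝ) ≤ r := le_trans (le_max_left _ _) hC
  have hr0 : (0:ℝ) < r := by linarith
  have hr1 : (1:ℝ) ≤ r := by linarith
  have ht0 : 0 < r ^ ξ := Real.rpow_pos_of_pos hr0 ξ
  set t := r ^ ξ with ht
  have hpow : ((25/4 : ℝ) ^ (1/(1-ξ))) ^ (1-ξ) = 25/4 := by
    rw [← Real.rpow_mul (by norm_num), one_div, inv_mul_cancel₀ h1ξ.ne', Real.rpow_one]
  have hrpow : (25/4 : ℝ) ≤ r ^ (1-ξ) := by
    rw [← hpow]
    exact Real.rpow_le_rpow (by positivity) (le_trans (le_max_right _ _) hC) h1ξ.le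
  have hsplit : t * r ^ (1-ξ) = r := by
    rw [ht, ← Real.rpow_add hr0]; norm_num
  have h25 : 25 * t ≤ 4 * r := by nlinarith [ht0.le]
  clear_value t
  clear hpow hrpow hsplit ht
  have hRr4 : (4:ℝ) ≤ R / r := by rw [le_div_iff₀ hr0]; linarith
  obtain ⟨k, hk1, hkge, hkle⟩ : ∃ k : ℕ, 1 ≤ k ∧ R / r ≤ (k:ℝ) ∧ (k:ℝ) ≤ R / r + 1 :=
    ⟨⌈R / r⌉₊, Nat.one_le_ceil_iff.mpr (by linarith), Nat.le_ceil _,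
      (Nat.ceil_lt_add_one (by linarith)).le⟩
  have hk4 : (4:ℝ) ≤ (k:ℝ) := le_trans hRr4 hkge
  have hk0 : (0:ℝ) < (k:ℝ) := by linarith
  have hRk : R ≤ r * k := by
    have := (div_le_iff₀ hr0).mp hkge; linarith
  have hkR : r * k ≤ R + r := by
    have h := (le_div_iff₀ hr0).mp (by linarith : (k:ℝ) - 1 ≤ R / r)
    nlinarith
  obtain ⟨ℓ, hℓ_ge, hℓ_le, hlk⟩ :
      ∃ ℓ : ℝ, t ≤ ℓ ∧ ℓ ≤ r ∧ ℓ * k = R - 2*t*((k:ℝ)+1) := by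
    refine ⟨(R - 2*t*((k:ℝ)+1)) / k, ?_, ?_, div_mul_cancel₀ _ hk0.ne'⟩
    · rw [le_div_iff₀ hk0]
      nlinarith [mul_le_mul_of_nonneg_right h25 hk0.le]
    · rw [div_le_iff₀ hk0]
      nlinarith [ht0.le, mul_pos ht0 hk0]
  have hℓ0 : 0 < ℓ := lt_of_lt_of_le ht0 hℓ_ge
  refine ⟨k, fun i => 2*t + i*(ℓ + 2*t), fun i => 2*t + i*(ℓ + 2*t) + ℓ,
    hk1, ?_, ?_, ?_, ?_, ?_, ?_, ?_⟩
  · intro i hi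
    have hik : (i:ℝ) ≤ (k:ℝ) - 1 := by
      have : (i:ℝ) + 1 ≤ (k:ℝ) := by exact_mod_cast hi
      linarith
    have hi0 : (0:ℝ) ≤ (i:ℝ) := Nat.cast_nonneg i
    have hnn : (0:ℝ) ≤ (i:ℝ) * (ℓ + 2*t) := mul_nonneg hi0 (by linarith)
    refine ⟨by simp only []; linarith, by simp only []; linarith, ?_⟩
    simp only []
    nlinarith [hlk]
  · intro i hi
    simp only []
    push_cast
    nlinarith
  · linarith
  · simp only [Nat.cast_zero, zero_mul, add_zero]
    exact ⟨le_refl _, by linarith⟩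
  · have hc : ((k-1:ℕ):ℝ) = (k:ℝ) - 1 := by
      rw [Nat.cast_sub hk1]; norm_num
    simp only [hc]
    constructor <;> nlinarith [hlk]
  · intro i hi
    simp only []
    push_cast
    ring
  · intro i hi
    simp only [add_sub_cancel_left]
    exact ⟨hℓ_ge, hℓ_le⟩
end

section
/- For every ξ ∈ (1/2, 1) there exist constants C₀(ξ) < ∞ and m(ξ) < ∞ such that for all reals N ≥ 0 and L ≥ s ≥ C₀(ξ) the following holds. There exist an integer J ≥ 2 and finite families 𝕀_1, …, 𝕀_J of closed subintervals of [−L, N + L], the intervals in 𝕀_1 ∪ ⋯ ∪ 𝕀_J having pairwise disjoint interiors and union equal to [−L, N + L], such that: (i) every interval has length at most 2L; (ii) for every 1 ≤ j ≤ J − 1 and every I ∈ 𝕀_j one has |I| ≥ √s/100, and both the distance from I to any other interval of 𝕀_1 ∪ ⋯ ∪ 𝕀_j and the distance from I to the set {−L, N + L} are at least max(2|I|^ξ, s^ξ/2); (iii) every I ∈ 𝕀_J has |I| ≤ s; (iv) J ≤ m(ξ)·log log(10L), and the total number of intervals in 𝕀_1 ∪ ⋯ ∪ 𝕀_J is at most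 (5 + 2N/L)·(log(10L))^{m(ξ)}. -/
set_option maxHeartbeats 2000000 in
/-- hierarchical partition of `[−L, N+L]` into families of closed intervals
`𝕀_1, …, 𝕀_J` (intervals encoded by their endpoint pairs `p = (p.1, p.2)`), the last
family being the holes, with separation, size and complexity properties. -/
theorem one_dimensional_bridge (ξ : ℝ) (hξ : ξ ∈ Set.Ioo (1 / 2 : ℝ) 1) :
    ∃ C₀ m : ℝ, ∀ N L s : ℝ, 0 ≤ N → C₀ ≤ s → s ≤ L →
      ∃ (J : ℕ) (I : ℕ → Finset (ℝ × ℝ)),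
        2 ≤ J ∧
        -- closed subintervals of [−L, N+L]
        (∀ j ∈ Finset.Icc 1 J, ∀ p ∈ I j, -L ≤ p.1 ∧ p.1 ≤ p.2 ∧ p.2 ≤ N + L) ∧
        -- pairwise disjoint interiors
        (∀ j ∈ Finset.Icc 1 J, ∀ j' ∈ Finset.Icc 1 J, ∀ p ∈ I j, ∀ p' ∈ I j',
          (j, p) ≠ (j', p') → Set.Ioo p.1 p.2 ∩ Set.Ioo p'.1 p'.2 = ∅) ∧
        -- union equal to [−L, N+L]
        (⋃ j ∈ Finset.Icc 1 J, ⋃ p ∈ I j, Set.Icc p.1 p.2) = Set.Icc (-L) (N + L) ∧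
        -- (i) every interval has length at most 2L
        (∀ j ∈ Finset.Icc 1 J, ∀ p ∈ I j, p.2 - p.1 ≤ 2 * L) ∧
        -- (ii) intervals of 𝕀_j, j < J: length ≥ √s/100 and separation
        (∀ j ∈ Finset.Icc 1 (J - 1), ∀ p ∈ I j,
          Real.sqrt s / 100 ≤ p.2 - p.1 ∧
          (∀ j' ∈ Finset.Icc 1 j, ∀ p' ∈ I j', (j', p') ≠ (j, p) →
            max (2 * (p.2 - p.1) ^ ξ) (s ^ ξ / 2) ≤ max (p'.1 - p.2) (p.1 - p'.2)) ∧
          max (2 * (p.2 - p.1) ^ ξ) (s ^ ξ / 2) ≤ min (p.1 + L) (N + L - p.2)) ∧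
        -- (iii) the holes have length at most s
        (∀ p ∈ I J, p.2 - p.1 ≤ s) ∧
        -- (iv) complexity
        (J : ℝ) ≤ m * Real.log (Real.log (10 * L)) ∧
        (∑ j ∈ Finset.Icc 1 J, ((I j).card : ℝ)) ≤
          (5 + 2 * N / L) * Real.log (10 * L) ^ m := by
  obtain ⟨hξh, hξ1⟩ := hξ
  have hξ0 : 0 < ξ := by linarith
  have h1ξ : 0 < 1 - ξ := by linarith
  set c : ℝ := Real.log 2 / (1 - ξ) with hc
  have hc0 : 0 ≤ c := div_nonneg (Real.log_nonneg one_le_two) h1ξ.le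
  set r : ℝ := max (max (4 / (1 - ξ)) (c + 1)) (Real.exp 1) with hrdef
  have hre : Real.exp 1 ≤ r := le_max_right _ _
  have hrc : c + 1 ≤ r := le_trans (le_max_right _ _) (le_max_left _ _)
  have hr4 : 4 / (1 - ξ) ≤ r := le_trans (le_max_left _ _) (le_max_left _ _)
  have hr0 : 0 ≤ r := le_trans (Real.exp_pos 1).le hre
  have hlogξ : 0 < Real.log ξ⁻¹ := Real.log_pos ((one_lt_inv₀ hξ0).mpr hξ1)
  refine ⟨Real.exp r, 4 + 2 * (Real.log ξ⁻¹)⁻¹, ?_⟩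
  intro N L s hN hC₀s hsL
  have hs1 : 1 ≤ s := le_trans (Real.one_le_exp hr0) hC₀s
  have hs0 : 0 < s := by linarith
  have hL0 : 0 < L := by linarith
  -- log s is large
  have hlogs : c + 1 ≤ Real.log s := by
    have := Real.log_le_log (Real.exp_pos r) hC₀s
    rw [Real.log_exp] at this; linarith
  -- s^(1-ξ) is large, and the same for anything ≥ s
  have hkey : ∀ x : ℝ, s ≤ x → (16 : ℝ) ≤ x ^ (1 - ξ) := by
    intro x hx
    have hx0 : (0:ℝ) < x := lt_of_lt_of_le hs0 hx
    have h1 : Real.exp (4 / (1 - ξ)) ≤ x := le_trans (le_trans (Real.exp_le_exp.2 hr4) hC₀s) hx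
    have h2 : Real.exp 4 ≤ x ^ (1 - ξ) := by
      calc Real.exp 4 = Real.exp (4 / (1 - ξ)) ^ (1 - ξ) := by
            rw [Real.rpow_def_of_pos (Real.exp_pos _), Real.log_exp]
            rw [div_mul_cancel₀]; positivity
        _ ≤ x ^ (1 - ξ) := Real.rpow_le_rpow (Real.exp_pos _).le h1 h1ξ.le
    refine le_trans ?_ h2
    have h3 : (2:ℝ) ≤ Real.exp 1 := by have := Real.add_one_le_exp 1; linarith
    calc (16:ℝ) = 2 ^ (4:ℕ) := by norm_num
      _ ≤ Real.exp 1 ^ (4:ℕ) := by gcongr <;> norm_num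
      _ = Real.exp 4 := by
          rw [← Real.exp_nat_mul]; norm_num
  -- the gap shrinking map
  have hhalf : ∀ x : ℝ, s ≤ x → 2 * x ^ ξ ≤ x / 8 := by
    intro x hx
    have hx0 : (0:ℝ) < x := lt_of_lt_of_le hs0 hx
    have h16 := hkey x hx
    have h2 : 16 * x ^ ξ ≤ x ^ (1 - ξ) * x ^ ξ :=
      mul_le_mul_of_nonneg_right h16 (Real.rpow_nonneg hx0.le ξ)
    rw [← Real.rpow_add hx0] at h2
    simp only [sub_add_cancel, Real.rpow_one] at h2
    linarith
  -- the top-level splitting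
  set T : ℝ := N + 2 * L with hT
  have hT0 : 0 < T := by simp only [hT]; linarith
  set K : ℕ := ⌈T / (2 * L)⌉₊ with hK
  have hK1 : 1 ≤ K := Nat.one_le_iff_ne_zero.mpr (by
    have : 0 < K := Nat.ceil_pos.mpr (by positivity)
    omega)
  have hKR : (0:ℝ) < (K:ℝ) := by exact_mod_cast hK1
  set w : ℝ := T / K with hw
  have hKw : (K:ℝ) * w = T := by rw [hw]; field_simp
  have hwle : w ≤ 2 * L := by
    rw [hw, div_le_iff₀ hKR]
    have h := Nat.le_ceil (T / (2 * L))
    rw [← hK] at h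
    calc T = T / (2*L) * (2*L) := by field_simp
      _ ≤ (K:ℝ) * (2*L) := by
          apply mul_le_mul_of_nonneg_right h; linarith
      _ = 2 * L * K := by ring
  have hwgt : L < w := by
    have h := Nat.ceil_lt_add_one (show (0:ℝ) ≤ T / (2*L) by positivity)
    rw [← hK] at h
    have h2 : T / (2*L) + 1 ≤ T / L := by
      rw [div_add' _ _ _ (by linarith : (2*L) ≠ 0), div_le_div_iff₀ (by linarith) hL0]
      have : 2 * L ≤ T := by simp only [hT]; linarith
      ring_nf; nlinarith
    have h3 : (K:ℝ) < T / L := lt_of_lt_of_le h h2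
    rw [hw, lt_div_iff₀ hKR]
    rw [lt_div_iff₀ hL0] at h3
    nlinarith
  have hw0 : 0 < w := lt_trans hL0 hwgt
  have hws : s < w := lt_of_le_of_lt hsL hwgt
  -- the gap sizes
  obtain ⟨g, hg_zero, hg_succ⟩ : ∃ g : ℕ → ℝ, g 0 = w ∧ ∀ n, g (n+1) = 2 * g n ^ ξ :=
    ⟨fun n => Nat.rec w (fun _ x => 2 * x ^ ξ) n, rfl, fun _ => rfl⟩
  have hg_pos : ∀ n, 0 < g n := by
    intro n; induction n with
    | zero => rw [hg_zero]; exact hw0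
    | succ n ih => rw [hg_succ]; positivity
  -- termination of the gap shrinking
  have hex : ∃ n, g n ≤ s := by
    by_contra hcon
    push_neg at hcon
    have hdec : ∀ n, g n ≤ w / 2 ^ n := by
      intro n; induction n with
      | zero => simp [hg_zero]
      | succ n ih =>
        have h1 : 2 * g n ^ ξ ≤ g n / 8 := hhalf (g n) (hcon n).le
        have h2 : g n / 8 ≤ w / 2 ^ n / 8 := by linarith
        rw [hg_succ]
        calc 2 * g n ^ ξ ≤ w / 2 ^ n / 8 := le_trans h1 h2
          _ = w / (2 ^ n * 8) := by rw [div_div]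
          _ ≤ w / 2 ^ (n+1) := by
              apply div_le_div_of_nonneg_left hw0.le (by positivity)
              rw [pow_succ]
              nlinarith [pow_pos (show (0:ℝ) < 2 by norm_num) n]
    obtain ⟨n, hn⟩ := pow_unbounded_of_one_lt (w / s) (show (1:ℝ) < 2 by norm_num)
    have : g n < s := by
      have h1 := hdec n
      have h2 : w / 2 ^ n < s := by
        rw [div_lt_iff₀ (by positivity)]
        rw [div_lt_iff₀ hs0] at hn
        nlinarith
      linarith
    exact absurd this (not_lt.mpr (hcon n).le)
  obtain ⟨Jn, hJn_le, hJn_gt⟩ : ∃ n, g n ≤ s ∧ ∀ m < n, s < g m := by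
    classical
    exact ⟨Nat.find hex, Nat.find_spec hex, fun m hm => lt_of_not_ge (Nat.find_min hex hm)⟩
  have hJn1 : 1 ≤ Jn := by
    rcases Nat.eq_zero_or_pos Jn with h | h
    · exfalso; rw [h] at hJn_le; rw [hg_zero] at hJn_le; linarith
    · exact h
  -- gap monotonicity facts
  have hg8 : ∀ n < Jn, g (n+1) ≤ g n / 8 := fun n hn => by
    rw [hg_succ]; exact hhalf (g n) (hJn_gt n hn).le
  have hg2 : ∀ n < Jn, 2 * g (n+1) ≤ g n := fun n hn => by
    have := hg8 n hn; have := hg_pos (n+1); linarith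
  have hgmono : ∀ n ≤ Jn, g n ≤ w := by
    intro n hn; induction n with
    | zero => rw [hg_zero]
    | succ n ih =>
      have h1 : n < Jn := hn
      have := hg8 n h1
      have := ih (le_of_lt h1)
      have := hg_pos n
      linarith
  -- the families of gap left endpoints
  obtain ⟨A, hA_zero, hA_succ⟩ : ∃ A : ℕ → Finset ℝ,
      A 0 = (Finset.range K).image (fun k : ℕ => -L + (k:ℝ) * w) ∧
      ∀ n, A (n+1) = A n ∪ (A n).image (fun a => a + (g n - g (n+1))) :=
    ⟨fun n => Nat.rec ((Finset.range K).image (fun k : ℕ => -L + (k:ℝ) * w))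
      (fun n S => S ∪ S.image (fun a => a + (g n - g (n+1)))) n, rfl, fun _ => rfl⟩
  have hA_card : ∀ n, (A n).card ≤ K * 2 ^ n := by
    intro n; induction n with
    | zero =>
      rw [hA_zero]
      calc _ ≤ (Finset.range K).card := Finset.card_image_le
        _ = K := Finset.card_range K
        _ ≤ K * 2 ^ 0 := by simp
    | succ n ih =>
      rw [hA_succ]
      calc _ ≤ (A n).card + ((A n).image _).card := Finset.card_union_le _ _
        _ ≤ (A n).card + (A n).card := by
            have := Finset.card_image_le (s := A n) (f := fun a => a + (g n - g (n+1)))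
            omega
        _ ≤ K * 2 ^ (n+1) := by rw [pow_succ, ← mul_assoc]; omega
  -- gaps stay inside the big interval
  have hA_in : ∀ n ≤ Jn, ∀ a ∈ A n, -L ≤ a ∧ a + g n ≤ N + L := by
    intro n hn; induction n with
    | zero =>
      intro a ha
      rw [hA_zero, Finset.mem_image] at ha
      obtain ⟨k, hk, rfl⟩ := ha
      rw [Finset.mem_range] at hk
      constructor
      · nlinarith [hw0, Nat.cast_nonneg (α := ℝ) k]
      · have hk1 : (k:ℝ) + 1 ≤ K := by exact_mod_cast hk
        have : (-L + k * w) + g 0 = -L + ((k:ℝ)+1) * w := by rw [hg_zero]; ring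
        rw [this]
        nlinarith [hw0, hKw]
    | succ n ih =>
      intro a ha
      have hnJ : n < Jn := hn
      have h2 := hg2 n hnJ
      have hp1 := hg_pos (n+1)
      rw [hA_succ, Finset.mem_union] at ha
      rcases ha with ha | ha
      · obtain ⟨h1, h2'⟩ := ih (le_of_lt hnJ) a ha
        exact ⟨h1, by linarith⟩
      · rw [Finset.mem_image] at ha
        obtain ⟨b, hb, rfl⟩ := ha
        obtain ⟨h1, h2'⟩ := ih (le_of_lt hnJ) b hb
        constructor
        · nlinarith
        · calc b + (g n - g (n+1)) + g (n+1) = b + g n := by ring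
            _ ≤ N + L := h2'
  -- gaps at the same level are separated
  have hA_sep : ∀ n ≤ Jn, ∀ a ∈ A n, ∀ a' ∈ A n, a ≠ a' → g n ≤ |a - a'| := by
    intro n hn; induction n with
    | zero =>
      intro a ha a' ha' hne
      rw [hA_zero, Finset.mem_image] at ha ha'
      obtain ⟨k, hk, rfl⟩ := ha
      obtain ⟨k', hk', rfl⟩ := ha'
      have hkk : k ≠ k' := by rintro rfl; exact hne rfl
      have h1 : (1:ℝ) ≤ |(k:ℝ) - k'| := by
        have : ((k:ℤ) - k') ≠ 0 := by
          simp only [sub_ne_zero]; exact_mod_cast hkk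
        have := Int.one_le_abs this
        calc (1:ℝ) = ((1:ℤ):ℝ) := by norm_num
          _ ≤ (|(k:ℤ) - k'| : ℝ) := by exact_mod_cast this
          _ = |(k:ℝ) - k'| := by push_cast; ring_nf
      have heq : (-L + (k:ℝ) * w) - (-L + (k':ℝ) * w) = ((k:ℝ) - k') * w := by ring
      rw [hg_zero, heq, abs_mul, abs_of_pos hw0]
      nlinarith
    | succ n ih =>
      intro a ha a' ha' hne
      have hnJ : n < Jn := hn
      have h2 := hg2 n hnJ
      have hp1 := hg_pos (n+1)
      have hp0 := hg_pos n
      rw [hA_succ, Finset.mem_union, Finset.mem_image] at ha ha'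
      have extract : ∀ x : ℝ, (x ∈ A n ∨ ∃ b ∈ A n, b + (g n - g (n+1)) = x) →
          ∃ b ∈ A n, ∃ o, (o = 0 ∨ o = g n - g (n+1)) ∧ x = b + o := by
        rintro x (hx | ⟨b, hb, rfl⟩)
        · exact ⟨x, hx, 0, Or.inl rfl, by ring⟩
        · exact ⟨b, hb, _, Or.inr rfl, rfl⟩
      obtain ⟨b, hb, o, ho, rfl⟩ := extract a ha
      obtain ⟨b', hb', o', ho', rfl⟩ := extract a' ha'
      have hd1 : g (n+1) ≤ g n - g (n+1) := by linarith
      have ho1 : 0 ≤ o ∧ o ≤ g n - g (n+1) := by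
        rcases ho with rfl | rfl <;> constructor <;> linarith
      have ho1' : 0 ≤ o' ∧ o' ≤ g n - g (n+1) := by
        rcases ho' with rfl | rfl <;> constructor <;> linarith
      by_cases hbb : b = b'
      · subst hbb
        rcases ho with rfl | rfl <;> rcases ho' with rfl | rfl
        · exact absurd rfl hne
        · have he : b + 0 - (b + (g n - g (n+1))) = -(g n - g (n+1)) := by ring
          rw [he, abs_neg, abs_of_nonneg (by linarith)]; linarith
        · have he : b + (g n - g (n+1)) - (b + 0) = g n - g (n+1) := by ring
          rw [he, abs_of_nonneg (by linarith)]; linarith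
        · exact absurd rfl hne
      · have hBB := ih (le_of_lt hnJ) b hb b' hb' hbb
        rcases le_total b b' with hor | hor
        · have h3 : g n ≤ b' - b := by
            rwa [abs_of_nonpos (by linarith), neg_sub] at hBB
          rw [abs_of_nonpos (by linarith)]
          linarith
        · have h3 : g n ≤ b - b' := by
            rwa [abs_of_nonneg (by linarith)] at hBB
          rw [abs_of_nonneg (by linarith)]
          linarith
  -- parent structure of gaps
  have hA_parent : ∀ n < Jn, ∀ a ∈ A (n+1), ∃ b ∈ A n,
      b ≤ a ∧ a + g (n+1) ≤ b + g n ∧ (a = b ∨ a = b + (g n - g (n+1))) := by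
    intro n hn a ha
    have h2 := hg2 n hn
    have hp1 := hg_pos (n+1)
    rw [hA_succ, Finset.mem_union, Finset.mem_image] at ha
    rcases ha with ha | ⟨b, hb, rfl⟩
    · exact ⟨a, ha, le_refl a, by linarith, Or.inl rfl⟩
    · exact ⟨b, hb, by linarith, by linarith, Or.inr rfl⟩
  -- dichotomy for distinct gaps at the same level
  have hdich_eq : ∀ n ≤ Jn, ∀ a ∈ A n, ∀ a' ∈ A n, a ≠ a' →
      a' + g n ≤ a ∨ a + g n ≤ a' := by
    intro n hn a ha a' ha' hne
    have h := hA_sep n hn a ha a' ha' hne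
    rcases le_total a a' with h1 | h1
    · right; rw [abs_of_nonpos (by linarith)] at h; linarith
    · left; rw [abs_of_nonneg (by linarith)] at h; linarith
  -- dichotomy: a gap at a deeper level avoids the middle interval of a
  -- shallower gap
  have hsep_lt : ∀ m n : ℕ, m < n → n ≤ Jn → ∀ a ∈ A n, ∀ a' ∈ A m,
      a' + g m - g (m+1) ≤ a ∨ a + g n ≤ a' + g (m+1) := by
    intro m n hmn
    induction n, hmn using Nat.le_induction with
    | base =>
      intro hnJ a ha a' ha'
      have hmJ : m < Jn := by omega
      have hp1 := hg_pos (m+1)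
      have h2 := hg2 m hmJ
      obtain ⟨b, hb, hba, hab, hor⟩ := hA_parent m hmJ a ha
      by_cases hbb : b = a'
      · subst hbb
        rcases hor with rfl | rfl
        · right; linarith
        · left; linarith
      · rcases hdich_eq m (le_of_lt hmJ) b hb a' ha' hbb with h | h
        · left; linarith
        · right; linarith
    | succ n hmn ih =>
      intro hnJ a ha a' ha'
      have hnJ' : n < Jn := by omega
      obtain ⟨b, hb, hba, hab, _⟩ := hA_parent n hnJ' a ha
      rcases ih (by omega) b hb a' ha' with h | h
      · left; linarith
      · right; linarith
  -- covering property
  have hcov : ∀ n ≤ Jn, ∀ x ∈ Set.Icc (-L) (N+L),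
      (∃ a ∈ A n, x ∈ Set.Icc a (a + g n)) ∨
      ∃ m, m < n ∧ ∃ a ∈ A m, x ∈ Set.Icc (a + g (m+1)) (a + g m - g (m+1)) := by
    intro n hn
    induction n with
    | zero =>
      intro x hx
      obtain ⟨hx1, hx2⟩ := hx
      left
      set k : ℕ := min (K-1) ⌊(x+L)/w⌋₊ with hk
      have hxL : 0 ≤ (x + L) / w := div_nonneg (by linarith) hw0.le
      refine ⟨-L + (k:ℝ) * w, ?_, ?_, ?_⟩
      · rw [hA_zero, Finset.mem_image]
        exact ⟨k, Finset.mem_range.mpr (by omega), rfl⟩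
      · have h1 : (k:ℝ) ≤ ⌊(x+L)/w⌋₊ := by
          exact_mod_cast min_le_right (K-1) _
        have h2 : ((⌊(x+L)/w⌋₊ : ℝ)) ≤ (x+L)/w := Nat.floor_le hxL
        have h3 : (k:ℝ) * w ≤ x + L := by
          rw [← div_mul_cancel₀ (x+L) (ne_of_gt hw0)]
          exact mul_le_mul_of_nonneg_right (le_trans h1 h2) hw0.le
        linarith
      · rcases le_or_gt (K-1) ⌊(x+L)/w⌋₊ with h | h
        · have hkK : k = K - 1 := min_eq_left h
          have : (k:ℝ) + 1 = K := by
            rw [hkK]; push_cast [Nat.cast_sub hK1]; ring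
          have : -L + (k:ℝ) * w + g 0 = -L + ((k:ℝ)+1) * w := by rw [hg_zero]; ring
          rw [this]
          have hT' : -L + ((k:ℝ)+1) * w = N + L := by
            rw [‹(k:ℝ) + 1 = K›, hKw]; simp only [hT]; ring
          linarith
        · have hkf : k = ⌊(x+L)/w⌋₊ := min_eq_right (le_of_lt h)
          have h4 : (x+L)/w < (k:ℝ) + 1 := by
            rw [hkf]; push_cast; exact Nat.lt_floor_add_one _
          have h5 : x + L < ((k:ℝ)+1) * w := by
            rw [← div_mul_cancel₀ (x+L) (ne_of_gt hw0)]
            exact mul_lt_mul_of_pos_right h4 hw0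
          have : -L + (k:ℝ) * w + g 0 = -L + ((k:ℝ)+1) * w := by rw [hg_zero]; ring
          rw [this]; linarith
    | succ n ih =>
      intro x hx
      have hnJ : n < Jn := hn
      rcases ih (le_of_lt hnJ) x hx with ⟨a, ha, hx1, hx2⟩ | ⟨m, hm, rest⟩
      · have hp1 := hg_pos (n+1)
        have h2 := hg2 n hnJ
        rcases le_total x (a + g (n+1)) with hc1 | hc1
        · left
          refine ⟨a, ?_, hx1, hc1⟩
          rw [hA_succ, Finset.mem_union]; exact Or.inl ha
        · rcases le_total (a + g n - g (n+1)) x with hc2 | hc2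
          · left
            refine ⟨a + (g n - g (n+1)), ?_, by linarith, by linarith⟩
            rw [hA_succ, Finset.mem_union, Finset.mem_image]
            exact Or.inr ⟨a, ha, rfl⟩
          · right
            exact ⟨n, Nat.lt_succ_self n, a, ha, hc1, hc2⟩
      · right
        exact ⟨m, by omega, rest⟩
  -- length lower bound for non-hole intervals
  have hsqrt : Real.sqrt s ≤ s := by
    nlinarith [Real.sq_sqrt hs0.le, Real.sqrt_nonneg s]
  have hlen_lb : ∀ n < Jn, Real.sqrt s / 100 ≤ g n - 2 * g (n+1) := by
    intro n hn
    have h8 := hg8 n hn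
    have hgs := hJn_gt n hn
    have := hg_pos n
    linarith
  -- numeric facts about logarithms, used for the complexity bounds
  have hlog10L' : r ≤ Real.log (10 * L) := by
    have h1 : Real.exp r ≤ 10 * L := by linarith
    have := Real.log_le_log (Real.exp_pos r) h1
    rwa [Real.log_exp] at this
  have hlog10L : 0 < Real.log (10 * L) :=
    lt_of_lt_of_le (lt_of_lt_of_le (Real.exp_pos 1) hre) hlog10L'
  have hX : 1 ≤ Real.log (Real.log (10 * L)) := by
    have h3 : Real.exp 1 ≤ Real.log (10 * L) := le_trans hre hlog10L'
    have := Real.log_le_log (Real.exp_pos 1) h3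
    rwa [Real.log_exp] at this
  have hcc : Real.log 2 = c * (1 - ξ) := by
    rw [hc]; field_simp
  have hlog2 : Real.log 2 ≤ 1 := by
    have := Real.log_le_sub_one_of_pos (show (0:ℝ) < 2 by norm_num)
    linarith
  have hlogid : ∀ n, Real.log (g n) - c = ξ ^ n * (Real.log w - c) := by
    intro n; induction n with
    | zero => rw [hg_zero]; simp
    | succ n ih =>
      rw [hg_succ n, Real.log_mul (by norm_num) (ne_of_gt (Real.rpow_pos_of_pos (hg_pos n) ξ)),
        Real.log_rpow (hg_pos n), pow_succ]
      nlinarith [ih]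
  have hn₀ : Jn - 1 < Jn := by omega
  set n₀ : ℕ := Jn - 1 with hn₀def
  have hgn₀ : s < g n₀ := hJn_gt n₀ hn₀
  have h1 : 1 ≤ ξ ^ n₀ * (Real.log w - c) := by
    have := hlogid n₀
    have hls : Real.log s ≤ Real.log (g n₀) := Real.log_le_log hs0 hgn₀.le
    linarith
  have hwlog : Real.log w - c ≤ Real.log (10 * L) := by
    have h2 : Real.log w ≤ Real.log (10 * L) :=
      Real.log_le_log hw0 (by linarith)
    linarith
  have hξp : (0:ℝ) < ξ ^ n₀ := pow_pos hξ0 n₀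
  have h3 : (ξ⁻¹) ^ n₀ ≤ Real.log (10 * L) := by
    rw [inv_pow, ← one_div, div_le_iff₀ hξp]
    nlinarith
  have h4 : (n₀:ℝ) * Real.log ξ⁻¹ ≤ Real.log (Real.log (10 * L)) := by
    have := Real.log_le_log (pow_pos (inv_pos.mpr hξ0) n₀) h3
    rwa [Real.log_pow] at this
  have h5 : (n₀:ℝ) ≤ Real.log (Real.log (10 * L)) * (Real.log ξ⁻¹)⁻¹ := by
    rw [← div_eq_mul_inv, le_div_iff₀ hlogξ]
    exact h4
  have hinv : 0 ≤ (Real.log ξ⁻¹)⁻¹ := inv_nonneg.mpr hlogξ.le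
  have hJn₀ : Jn = n₀ + 1 := by omega
  -- the families of intervals
  set Ifam : ℕ → Finset (ℝ × ℝ) := fun j =>
    if j = Jn + 1 then (A Jn).image (fun a => (a, a + g Jn))
    else (A (j-1)).image (fun a => (a + g j, a + g (j-1) - g j)) with hIfam
  have hmem_hole : ∀ p ∈ Ifam (Jn+1), ∃ a ∈ A Jn, p = (a, a + g Jn) := by
    intro p hp
    simp only [hIfam, if_pos rfl, Finset.mem_image] at hp
    obtain ⟨a, ha, rfl⟩ := hp
    exact ⟨a, ha, rfl⟩
  have hmem_int : ∀ j, 1 ≤ j → j ≤ Jn → ∀ p ∈ Ifam j,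
      ∃ n, n + 1 = j ∧ ∃ a ∈ A n, p = (a + g (n+1), a + g n - g (n+1)) := by
    intro j h1 h2 p hp
    have hne : j ≠ Jn + 1 := by omega
    simp only [hIfam, if_neg hne, Finset.mem_image] at hp
    obtain ⟨a, ha, rfl⟩ := hp
    have hj1 : j - 1 + 1 = j := by omega
    exact ⟨j - 1, hj1, a, ha, by rw [hj1]⟩
  -- subinterval property
  have hsub : ∀ j ∈ Finset.Icc 1 (Jn+1), ∀ p ∈ Ifam j,
      -L ≤ p.1 ∧ p.1 ≤ p.2 ∧ p.2 ≤ N + L := by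
    intro j hj p hp
    rw [Finset.mem_Icc] at hj
    by_cases h : j = Jn + 1
    · subst h
      obtain ⟨a, ha, rfl⟩ := hmem_hole p hp
      obtain ⟨h1, h2⟩ := hA_in Jn le_rfl a ha
      exact ⟨h1, by simp only; linarith [hg_pos Jn], h2⟩
    · have hjn : j ≤ Jn := by omega
      obtain ⟨n, hn1, a, ha, rfl⟩ := hmem_int j hj.1 hjn p hp
      have hnJ : n < Jn := by omega
      obtain ⟨h1, h2⟩ := hA_in n (le_of_lt hnJ) a ha
      have h3 := hg2 n hnJ
      have h4 := hg_pos (n+1)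
      exact ⟨by simp only; linarith, by simp only; linarith, by simp only; linarith⟩
  -- main disjointness lemma (with ordered levels)
  have hmain : ∀ j j' : ℕ, 1 ≤ j' → j' ≤ j → j ≤ Jn + 1 →
      ∀ p ∈ Ifam j, ∀ p' ∈ Ifam j', ((j:ℕ), p) ≠ (j', p') →
      Set.Ioo p.1 p.2 ∩ Set.Ioo p'.1 p'.2 = ∅ := by
    intro j j' h1' hj'j hjJ p hp p' hp' hne
    rw [Set.eq_empty_iff_forall_notMem]
    rintro x ⟨⟨hxa, hxb⟩, ⟨hxc, hxd⟩⟩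
    by_cases hj : j = Jn + 1
    · subst hj
      obtain ⟨a, ha, rfl⟩ := hmem_hole p hp
      by_cases hj2 : j' = Jn + 1
      · subst hj2
        obtain ⟨a', ha', rfl⟩ := hmem_hole p' hp'
        have haa : a ≠ a' := by
          rintro rfl; exact hne rfl
        rcases hdich_eq Jn le_rfl a ha a' ha' haa with h | h <;>
          simp only at hxa hxb hxc hxd <;> linarith
      · have hj'n : j' ≤ Jn := by omega
        obtain ⟨m, hm1, a', ha', rfl⟩ := hmem_int j' h1' hj'n p' hp'
        have hmJ : m < Jn := by omega
        rcases hsep_lt m Jn hmJ le_rfl a ha a' ha' with h | h <;>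
          simp only at hxa hxb hxc hxd <;> linarith
    · have hjn : j ≤ Jn := by omega
      have hj'n : j' ≤ Jn := by omega
      obtain ⟨n, hn1, a, ha, rfl⟩ := hmem_int j (by omega) hjn p hp
      obtain ⟨m, hm1, a', ha', rfl⟩ := hmem_int j' h1' hj'n p' hp'
      have hnJ : n < Jn := by omega
      have hmn : m ≤ n := by omega
      have hp1 := hg_pos (n+1)
      have hp1' := hg_pos (m+1)
      rcases eq_or_lt_of_le hmn with heq | hlt
      · subst heq
        have haa : a ≠ a' := by
          rintro rfl
          exact hne (by rw [show j = j' from by omega])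
        rcases hdich_eq m (le_of_lt hnJ) a ha a' ha' haa with h | h <;>
          simp only at hxa hxb hxc hxd <;> linarith [hg2 m hnJ]
      · rcases hsep_lt m n hlt (le_of_lt hnJ) a ha a' ha' with h | h <;>
          simp only at hxa hxb hxc hxd <;> linarith
  refine ⟨Jn + 1, Ifam, by omega, hsub, ?_, ?_, ?_, ?_, ?_, ?_, ?_⟩
  · -- disjoint interiors
    intro j hj j' hj' p hp p' hp' hne
    rw [Finset.mem_Icc] at hj hj'
    rcases le_total j' j with h | h
    · exact hmain j j' hj'.1 h hj.2 p hp p' hp' hne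
    · rw [Set.inter_comm]
      exact hmain j' j hj.1 h hj'.2 p' hp' p hp (Ne.symm hne)
  · -- union
    apply Set.Subset.antisymm
    · intro x hx
      simp only [Set.mem_iUnion, exists_prop] at hx
      obtain ⟨j, hj, p, hp, hxp⟩ := hx
      obtain ⟨h1, h2, h3⟩ := hsub j hj p hp
      rw [Set.mem_Icc] at hxp ⊢
      exact ⟨by linarith [hxp.1], by linarith [hxp.2]⟩
    · intro x hx
      simp only [Set.mem_iUnion, exists_prop]
      rcases hcov Jn le_rfl x hx with ⟨a, ha, hx1, hx2⟩ | ⟨m, hm, a, ha, hx1, hx2⟩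
      · refine ⟨Jn+1, Finset.mem_Icc.mpr (by omega), (a, a + g Jn), ?_, hx1, hx2⟩
        simp only [hIfam, if_pos rfl, Finset.mem_image]
        exact ⟨a, ha, rfl⟩
      · refine ⟨m+1, Finset.mem_Icc.mpr (by omega),
          (a + g (m+1), a + g m - g (m+1)), ?_, hx1, hx2⟩
        simp only [hIfam, if_neg (show m+1 ≠ Jn+1 by omega), Finset.mem_image,
          Nat.add_sub_cancel]
        exact ⟨a, ha, rfl⟩
  · -- length at most 2L
    intro j hj p hp
    rw [Finset.mem_Icc] at hj
    by_cases h : j = Jn + 1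
    · subst h
      obtain ⟨a, ha, rfl⟩ := hmem_hole p hp
      show a + g Jn - a ≤ 2 * L
      linarith [hJn_le]
    · obtain ⟨n, hn1, a, ha, rfl⟩ := hmem_int j hj.1 (by omega) p hp
      have hnJ : n < Jn := by omega
      show (a + g n - g (n+1)) - (a + g (n+1)) ≤ 2 * L
      have := hgmono n (by omega)
      have := hg_pos (n+1)
      linarith
  · -- separation properties of non-hole intervals
    intro j hj p hp
    rw [Finset.mem_Icc] at hj
    have hjn : j ≤ Jn := by omega
    obtain ⟨n, hn1, a, ha, rfl⟩ := hmem_int j hj.1 hjn p hp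
    have hnJ : n < Jn := by omega
    have hgs := hJn_gt n hnJ
    have h2 := hg2 n hnJ
    have hgp := hg_pos n
    have hgp1 := hg_pos (n+1)
    have hup : max (2 * ((a + g n - g (n+1)) - (a + g (n+1))) ^ ξ) (s ^ ξ / 2)
        ≤ g (n+1) := by
      rw [show (a + g n - g (n+1)) - (a + g (n+1)) = g n - 2 * g (n+1) from by ring]
      have hsucc := hg_succ n
      apply max_le
      · have h0 : 0 ≤ g n - 2 * g (n+1) := by linarith
        have hle : g n - 2 * g (n+1) ≤ g n := by linarith
        have := Real.rpow_le_rpow h0 hle hξ0.le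
        linarith
      · have hsx : s ^ ξ ≤ g n ^ ξ := Real.rpow_le_rpow hs0.le hgs.le hξ0.le
        have h0 : 0 ≤ g n ^ ξ := Real.rpow_nonneg hgp.le ξ
        linarith
    refine ⟨?_, ?_, ?_⟩
    · show Real.sqrt s / 100 ≤ (a + g n - g (n+1)) - (a + g (n+1))
      linarith [hlen_lb n hnJ]
    · intro j' hj' p' hp' hne'
      rw [Finset.mem_Icc] at hj'
      obtain ⟨m, hm1, a', ha', rfl⟩ := hmem_int j' hj'.1 (by omega) p' hp'
      have hgp1' := hg_pos (m+1)
      have hdich : a' + g m - g (m+1) ≤ a ∨ a + g n ≤ a' + g (m+1) := by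
        rcases eq_or_lt_of_le (show m ≤ n by omega) with heq | hlt
        · subst heq
          have haa : a' ≠ a := by
            rintro rfl
            exact hne' (by rw [show j' = j from by omega])
          rcases hdich_eq m (by omega) a' ha' a ha haa with h | h
          · right; linarith
          · left; linarith
        · exact hsep_lt m n hlt (by omega) a ha a' ha'
      refine le_trans hup ?_
      rcases hdich with h | h
      · exact le_max_iff.mpr (Or.inr (by show g (n+1) ≤ a + g (n+1) - (a' + g m - g (m+1)); linarith))
      · exact le_max_iff.mpr (Or.inl (by show g (n+1) ≤ a' + g (m+1) - (a + g n - g (n+1)); linarith))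
    · obtain ⟨hb1, hb2⟩ := hA_in n (by omega) a ha
      refine le_trans hup (le_min ?_ ?_)
      · show g (n+1) ≤ a + g (n+1) + L; linarith
      · show g (n+1) ≤ N + L - (a + g n - g (n+1)); linarith
  · -- holes are short
    intro p hp
    obtain ⟨a, ha, rfl⟩ := hmem_hole p hp
    show a + g Jn - a ≤ s
    linarith [hJn_le]
  · -- bound on the number of levels
    have hJcast : ((Jn + 1 : ℕ):ℝ) = (n₀:ℝ) + 2 := by
      rw [hJn₀]; push_cast; ring
    rw [hJcast]
    nlinarith [mul_nonneg hinv (by linarith : (0:ℝ) ≤ Real.log (Real.log (10 * L)) - 1)]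
  · -- bound on the total number of intervals
    have hcard : ∀ j ∈ Finset.Icc 1 (Jn+1), ((Ifam j).card : ℝ) ≤ ((K * 2 ^ Jn : ℕ) : ℝ) := by
      intro j hj
      rw [Finset.mem_Icc] at hj
      by_cases h : j = Jn + 1
      · subst h
        have h1 : (Ifam (Jn+1)).card ≤ (A Jn).card := by
          simp only [hIfam, if_pos rfl]; exact Finset.card_image_le
        exact_mod_cast le_trans h1 (hA_card Jn)
      · have h1 : (Ifam j).card ≤ (A (j-1)).card := by
          simp only [hIfam, if_neg h]; exact Finset.card_image_le
        have h2 := hA_card (j-1)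
        have h3 : K * 2 ^ (j-1) ≤ K * 2 ^ Jn :=
          Nat.mul_le_mul_left K (Nat.pow_le_pow_right (by norm_num) (by omega))
        exact_mod_cast le_trans h1 (le_trans h2 h3)
    have hsum : (∑ j ∈ Finset.Icc 1 (Jn+1), ((Ifam j).card : ℝ)) ≤
        ((Jn+1 : ℕ) : ℝ) * ((K * 2 ^ Jn : ℕ) : ℝ) := by
      have h := Finset.sum_le_card_nsmul (Finset.Icc 1 (Jn+1))
        (fun j => ((Ifam j).card : ℝ)) (((K * 2 ^ Jn : ℕ)):ℝ) hcard
      rw [Nat.card_Icc, nsmul_eq_mul] at h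
      have hcc' : (Jn + 1 + 1 - 1) = Jn + 1 := by omega
      rw [hcc'] at h
      exact h
    have hKreal : (K:ℝ) ≤ 5 + 2 * N / L := by
      have h := Nat.ceil_lt_add_one (show (0:ℝ) ≤ T/(2*L) by positivity)
      rw [← hK] at h
      have hTL : T/(2*L) = N/(2*L) + 1 := by
        rw [hT]; field_simp
      have hNL : N/(2*L) ≤ 2*N/L := by
        rw [div_le_div_iff₀ (by linarith) hL0]
        nlinarith
      rw [hTL] at h
      linarith
    have hpow2 : ((Jn:ℝ)+1) * (2:ℝ)^Jn ≤
        Real.log (10*L) ^ ((4:ℝ) + 2*(Real.log ξ⁻¹)⁻¹) := by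
      have e1 : ((Jn:ℝ)+1) ≤ 2^(Jn+1) := by
        have : Jn+1 < 2^(Jn+1) := Nat.lt_two_pow_self
        have h' : ((Jn+1:ℕ):ℝ) ≤ ((2^(Jn+1) : ℕ):ℝ) := by exact_mod_cast this.le
        push_cast at h'
        linarith
      have e2 : ((Jn:ℝ)+1) * 2^Jn ≤ 2^(2*Jn+1) := by
        have := mul_le_mul_of_nonneg_right e1
          (pow_nonneg (by norm_num : (0:ℝ) ≤ 2) Jn)
        calc ((Jn:ℝ)+1) * 2^Jn ≤ 2^(Jn+1) * 2^Jn := this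
          _ = 2^(2*Jn+1) := by rw [← pow_add]; ring_nf
      have e3 : (2:ℝ)^(2*Jn+1) ≤
          Real.exp (Real.log (Real.log (10*L)) * (4 + 2*(Real.log ξ⁻¹)⁻¹)) := by
        have eid : (2:ℝ)^(2*Jn+1) = Real.exp (Real.log 2 * (2*(Jn:ℝ)+1)) := by
          rw [← Real.rpow_natCast 2 (2*Jn+1), Real.rpow_def_of_pos (by norm_num)]
          congr 1; push_cast; ring
        rw [eid]
        apply Real.exp_le_exp.mpr
        set X := Real.log (Real.log (10*L)) with hXdef
        have hXn : (n₀:ℝ) ≤ X * (Real.log ξ⁻¹)⁻¹ := h5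
        have hn' : (Jn:ℝ) = (n₀:ℝ) + 1 := by rw [hJn₀]; push_cast; ring
        have hlog2' : 0 ≤ Real.log 2 := Real.log_nonneg (by norm_num)
        calc Real.log 2 * (2*(Jn:ℝ)+1) ≤ 1 * (2*(Jn:ℝ)+1) :=
              mul_le_mul_of_nonneg_right hlog2 (by positivity)
          _ = 2*(n₀:ℝ)+3 := by rw [hn']; ring
          _ ≤ 4*X + 2*(X*(Real.log ξ⁻¹)⁻¹) := by linarith
          _ = X * (4 + 2*(Real.log ξ⁻¹)⁻¹) := by ring
      have e4 : Real.exp (Real.log (Real.log (10*L)) * (4 + 2*(Real.log ξ⁻¹)⁻¹)) =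
          Real.log (10*L) ^ ((4:ℝ) + 2*(Real.log ξ⁻¹)⁻¹) :=
        (Real.rpow_def_of_pos hlog10L _).symm
      calc ((Jn:ℝ)+1) * (2:ℝ)^Jn ≤ (2:ℝ)^(2*Jn+1) := e2
        _ ≤ _ := by rw [← e4]; exact e3
    calc (∑ j ∈ Finset.Icc 1 (Jn+1), ((Ifam j).card : ℝ))
        ≤ ((Jn+1 : ℕ) : ℝ) * ((K * 2 ^ Jn : ℕ) : ℝ) := hsum
      _ = (K:ℝ) * (((Jn:ℝ)+1) * (2:ℝ)^Jn) := by push_cast; ring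
      _ ≤ (5 + 2 * N / L) * Real.log (10*L) ^ ((4:ℝ) + 2*(Real.log ξ⁻¹)⁻¹) := by
          apply mul_le_mul hKreal hpow2 (by positivity)
          have : (0:ℝ) ≤ 2*N/L := by positivity
          linarith
end

section
/- Let K and Γ be positive integers and let S ⊆ {1, …, K} be nonempty. Then for every positive integer t with t ≤ (|S| − K/Γ)/(1 + K/Γ), there exist elements s_1 < s_2 < ⋯ < s_t of S with s_{i+1} − s_i ≤ Γ for all 1 ≤ i < t. -/
/-- from any subset `S` of `{1, …, K}`, one can extract `t` increasing
elements with consecutive gaps at most `Γ`, provided `t ≤ (|S| − K/Γ)/(1 + K/Γ)`. -/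
theorem extract_close_subsequence (K Γ : ℕ) (hK : 0 < K) (hΓ : 0 < Γ)
    (S : Finset ℕ) (hS : S ⊆ Finset.Icc 1 K) (hSne : S.Nonempty)
    (t : ℕ) (ht : 0 < t)
    (htle : (t : ℝ) ≤ ((S.card : ℝ) - (K : ℝ) / (Γ : ℝ)) / (1 + (K : ℝ) / (Γ : ℝ))) :
    ∃ f : ℕ → ℕ, (∀ i < t, f i ∈ S) ∧
      (∀ i j, i < j → j < t → f i < f j) ∧
      (∀ i, i + 1 < t → f (i + 1) - f i ≤ Γ) := by
  classical
  set n := S.card with hn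
  have hn1 : 1 ≤ n := Finset.card_pos.mpr hSne
  let e := S.orderIsoOfFin hn.symm
  set a : ℕ → ℕ := fun i => if h : i < n then (e ⟨i, h⟩ : ℕ) else 0 with ha
  have hamem : ∀ i, i < n → a i ∈ S := by
    intro i h
    simp only [ha, dif_pos h]
    exact (e ⟨i, h⟩).2
  have hmono : ∀ i j, i < j → j < n → a i < a j := by
    intro i j hij hjn
    have hin : i < n := lt_trans hij hjn
    simp only [ha, dif_pos hin, dif_pos hjn]
    exact_mod_cast e.strictMono (show (⟨i, hin⟩ : Fin n) < ⟨j, hjn⟩ from hij)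
  -- bounds on a
  have ha1 : 1 ≤ a 0 := by
    have := hS (hamem 0 hn1)
    exact (Finset.mem_Icc.mp this).1
  have haK : a (n-1) ≤ K := by
    have := hS (hamem (n-1) (by omega))
    exact (Finset.mem_Icc.mp this).2
  -- bad gaps
  set bad : ℕ → Prop := fun k => Γ + 1 ≤ a (k+1) - a k with hbad
  set B : Finset ℕ := (Finset.range (n-1)).filter bad with hB
  set m : ℕ := B.card with hm
  set c : ℕ → ℕ := fun i => ((Finset.range i).filter bad).card with hc
  have hcmono : ∀ i j, i ≤ j → c i ≤ c j := by
    intro i j h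
    exact Finset.card_le_card (Finset.filter_subset_filter _ (Finset.range_subset_range.mpr h))
  have hcbound : ∀ i, i < n → c i ≤ m := by
    intro i h
    exact hcmono i (n-1) (by omega)
  have hstep : ∀ k, bad k → c (k+1) = c k + 1 := by
    intro k hk
    simp only [hc, Finset.range_add_one, Finset.filter_insert, if_pos hk]
    rw [Finset.card_insert_of_notMem (by simp)]
  -- telescoping sum
  have hsum : ∀ j, j < n → a 0 + ∑ k ∈ Finset.range j, (a (k+1) - a k) = a j := by
    intro j hj
    induction j with
    | zero => simp
    | succ j ih =>
      rw [Finset.sum_range_succ, ← Nat.add_assoc, ih (by omega)]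
      have := hmono j (j+1) (by omega) hj
      omega
  have hsumK : ∑ k ∈ Finset.range (n-1), (a (k+1) - a k) ≤ K - 1 := by
    have := hsum (n-1) (by omega)
    omega
  have hmK : m * (Γ + 1) ≤ K - 1 := by
    calc m * (Γ + 1) ≤ ∑ k ∈ B, (a (k+1) - a k) := by
          rw [← Finset.sum_const_nat (m := Γ + 1) (fun x hx => rfl)]
          exact Finset.sum_le_sum (fun k hk => (Finset.mem_filter.mp hk).2
            )
      _ ≤ ∑ k ∈ Finset.range (n-1), (a (k+1) - a k) :=
          Finset.sum_le_sum_of_subset (Finset.filter_subset _ _)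
      _ ≤ K - 1 := hsumK
  -- arithmetic: t * (m+1) ≤ n
  have htm : t * (m + 1) ≤ n := by
    have hΓR : (0:ℝ) < Γ := by exact_mod_cast hΓ
    have hmG : m * Γ ≤ K := by
      have : m * Γ ≤ m * (Γ + 1) := Nat.mul_le_mul_left m (by omega)
      omega
    have hmKR : (m:ℝ) ≤ (K:ℝ) / Γ := by
      rw [le_div_iff₀ hΓR]; exact_mod_cast hmG
    have hden : (0:ℝ) < 1 + (K:ℝ)/Γ := by positivity
    have h1 : (t:ℝ) * (1 + (K:ℝ)/Γ) ≤ (n:ℝ) - (K:ℝ)/Γ := by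
      rw [← le_div_iff₀ hden]; exact htle
    have h2 : ((t * (m+1) : ℕ) : ℝ) ≤ (n:ℝ) := by
      push_cast
      have hKΓpos : (0:ℝ) ≤ (K:ℝ)/Γ := by positivity
      nlinarith [ht.le, (show (0:ℝ) ≤ t by positivity)]
    exact_mod_cast h2
  -- pigeonhole
  obtain ⟨v, hv, hvcard⟩ := Finset.exists_le_card_fiber_of_mul_le_card_of_maps_to
    (s := Finset.range n) (t := Finset.range (m+1)) (f := c)
    (fun i hi => Finset.mem_range.mpr (Nat.lt_succ_of_le (hcbound i (Finset.mem_range.mp hi))))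
    ⟨0, Finset.mem_range.mpr (Nat.succ_pos m)⟩
    (by rw [Finset.card_range, Finset.card_range, Nat.mul_comm]; exact htm)
  set F : Finset ℕ := (Finset.range n).filter (fun x => c x = v) with hF
  have hFne : F.Nonempty := Finset.card_pos.mp (lt_of_lt_of_le ht hvcard)
  set j0 := F.min' hFne with hj0
  set j1 := F.max' hFne with hj1
  have hj0F : j0 ∈ F := Finset.min'_mem _ _
  have hj1F : j1 ∈ F := Finset.max'_mem _ _
  have hj01 : j0 ≤ j1 := Finset.min'_le _ _ hj1F
  have hj1n : j1 < n := Finset.mem_range.mp (Finset.mem_filter.mp hj1F).1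
  have hFsub : F ⊆ Finset.Icc j0 j1 := fun x hx =>
    Finset.mem_Icc.mpr ⟨Finset.min'_le _ _ hx, Finset.le_max' _ _ hx⟩
  have hcardF : t ≤ j1 + 1 - j0 := by
    have := Finset.card_le_card hFsub
    rw [Nat.card_Icc] at this
    omega
  have hcj0 : c j0 = v := (Finset.mem_filter.mp hj0F).2
  have hcj1 : c j1 = v := (Finset.mem_filter.mp hj1F).2
  have hcv : ∀ k, j0 ≤ k → k ≤ j1 → c k = v := fun k h1 h2 =>
    le_antisymm (hcj1 ▸ hcmono k j1 h2) (hcj0 ▸ hcmono j0 k h1)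
  have hgood : ∀ k, j0 ≤ k → k < j1 → a (k+1) - a k ≤ Γ := by
    intro k h1 h2
    by_contra h
    have hb : bad k := by simpa [hbad] using Nat.succ_le_of_lt (Nat.lt_of_not_le h)
    have := hstep k hb
    have e1 := hcv k h1 (le_of_lt h2)
    have e2 := hcv (k+1) (by omega) h2
    omega
  refine ⟨fun i => a (j0 + i), ?_, ?_, ?_⟩
  · intro i hi
    exact hamem _ (by omega)
  · intro i j hij hjt
    exact hmono _ _ (by omega) (by omega)
  · intro i hi
    have : j0 + i < j1 := by omega
    have := hgood (j0 + i) (by omega) this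
    simpa [Nat.add_assoc] using this
end

section
/- Let d ≥ 1, let X ⊆ ℤ^d be a finite nonempty set, let Q > 0 be real, and let (n_x)_{x ∈ X} be nonnegative reals with Σ_{x ∈ X} n_x ≥ Q. Then at least one of the following holds: (a) there exist x, y ∈ X with |x − y|_∞ ≥ 2, n_x ≥ Q/(2|X|) and n_y ≥ Q/(2|X|); or (b) there exists x ∈ X with n_x ≥ Q·2^{−(2d+1)}. -/
/-- if nonnegative weights on a finite set `X ⊆ ℤ^d` sum to at least `Q`,
then either two sites at `ℓ∞`-distance at least 2 both carry weight at least `Q/(2|X|)`,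
or some site carries weight at least `Q·2^{−(2d+1)}`. -/
theorem two_heavy_points_or_one_very_heavy (d : ℕ) (hd : 1 ≤ d)
    (X : Finset (Fin d → ℤ)) (hX : X.Nonempty) (Q : ℝ) (hQ : 0 < Q)
    (n : (Fin d → ℤ) → ℝ) (hn : ∀ x ∈ X, 0 ≤ n x) (hsum : Q ≤ ∑ x ∈ X, n x) :
    (∃ x ∈ X, ∃ y ∈ X, (∃ i, 2 ≤ |x i - y i|) ∧
      Q / (2 * X.card) ≤ n x ∧ Q / (2 * X.card) ≤ n y) ∨
    (∃ x ∈ X, Q * (2 : ℝ) ^ (-(2 * (d : ℤ) + 1)) ≤ n x) := by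
  classical
  have hcard : 0 < (X.card : ℝ) := by exact_mod_cast Finset.card_pos.mpr hX
  set c : ℝ := Q / (2 * X.card) with hc
  have hcpos : 0 < c := by apply div_pos hQ; positivity
  set H := X.filter (fun x => c ≤ n x) with hH
  have hHsub : H ⊆ X := Finset.filter_subset _ _
  have hlight : ∑ x ∈ X \ H, n x ≤ Q / 2 := by
    have h1 : ∀ x ∈ X \ H, n x ≤ c := by
      intro x hx
      rcases Finset.mem_sdiff.mp hx with ⟨hx1, hx2⟩
      by_contra h
      exact hx2 (Finset.mem_filter.mpr ⟨hx1, le_of_not_ge h⟩)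
    calc ∑ x ∈ X \ H, n x ≤ (X \ H).card • c := Finset.sum_le_card_nsmul _ _ _ h1
      _ = ((X \ H).card : ℝ) * c := by simp [nsmul_eq_mul]
      _ ≤ (X.card : ℝ) * c := by
          apply mul_le_mul_of_nonneg_right _ hcpos.le
          exact_mod_cast Finset.card_le_card Finset.sdiff_subset
      _ = Q / 2 := by rw [hc]; field_simp
  have hsplit : ∑ x ∈ X \ H, n x + ∑ x ∈ H, n x = ∑ x ∈ X, n x :=
    Finset.sum_sdiff hHsub
  have hheavy : Q / 2 ≤ ∑ x ∈ H, n x := by linarith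
  have hHne : H.Nonempty := by
    rcases Finset.eq_empty_or_nonempty H with h | h
    · rw [h] at hheavy; simp at hheavy; linarith
    · exact h
  by_cases hfar : ∃ x ∈ H, ∃ y ∈ H, ∃ i, 2 ≤ |x i - y i|
  · obtain ⟨x, hx, y, hy, hi⟩ := hfar
    exact Or.inl ⟨x, hHsub hx, y, hHsub hy, hi,
      (Finset.mem_filter.mp hx).2, (Finset.mem_filter.mp hy).2⟩
  · right
    push_neg at hfar
    obtain ⟨x0, hx0⟩ := hHne
    have hbox : H ⊆ Fintype.piFinset (fun i => Finset.Icc (x0 i - 1) (x0 i + 1)) := by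
      intro y hy
      rw [Fintype.mem_piFinset]
      intro i
      have h2 : |x0 i - y i| < 2 := hfar x0 hx0 y hy i
      rw [abs_lt] at h2
      rw [Finset.mem_Icc]
      omega
    have hHcard : (H.card : ℝ) ≤ 3 ^ d := by
      have h3 : H.card ≤ 3 ^ d := by
        calc H.card ≤ (Fintype.piFinset (fun i => Finset.Icc (x0 i - 1) (x0 i + 1))).card :=
              Finset.card_le_card hbox
          _ = 3 ^ d := by
              rw [Fintype.card_piFinset]
              simp only [Int.card_Icc]
              have : ∀ i : Fin d, (x0 i + 1 + 1 - (x0 i - 1)).toNat = 3 := by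
                intro i; omega
              simp [this]
      exact_mod_cast h3
    obtain ⟨x, hx, hmax⟩ := H.exists_max_image n ⟨x0, hx0⟩
    refine ⟨x, hHsub hx, ?_⟩
    have hnx : 0 ≤ n x := hn x (hHsub hx)
    have hsumle : ∑ y ∈ H, n y ≤ (H.card : ℝ) * n x := by
      calc ∑ y ∈ H, n y ≤ ∑ y ∈ H, n x := Finset.sum_le_sum (fun y hy => hmax y hy)
        _ = (H.card : ℝ) * n x := by rw [Finset.sum_const, nsmul_eq_mul]
    have h1 : Q / 2 ≤ (3 : ℝ) ^ d * n x := by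
      calc Q / 2 ≤ (H.card : ℝ) * n x := le_trans hheavy hsumle
        _ ≤ (3 : ℝ) ^ d * n x := mul_le_mul_of_nonneg_right hHcard hnx
    have hzp : (2 : ℝ) ^ (-(2 * (d : ℤ) + 1)) = ((2 : ℝ) ^ (2 * d + 1))⁻¹ := by
      rw [show (-(2 * (d : ℤ) + 1)) = -((2 * d + 1 : ℕ) : ℤ) by push_cast; ring,
        zpow_neg, zpow_natCast]
    rw [hzp]
    have hB : (0 : ℝ) < 2 ^ (2 * d + 1) := by positivity
    have h2 : 2 * (3 : ℝ) ^ d ≤ 2 ^ (2 * d + 1) := by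
      have h34 : (3 : ℝ) ^ d ≤ 4 ^ d := by
        apply pow_le_pow_left₀ (by norm_num) (by norm_num)
      calc 2 * (3 : ℝ) ^ d ≤ 2 * 4 ^ d := by linarith
        _ = 2 ^ (2 * d + 1) := by
            rw [pow_succ, pow_mul]; ring_nf
    rw [← div_eq_mul_inv, div_le_iff₀ hB]
    nlinarith [mul_le_mul_of_nonneg_left h2 hnx]
end

section
/- Let d ≥ 1 and K ≥ 1 be integers, and let z_1, …, z_n ∈ ℤ^d satisfy |z_{i+1} − z_i|_∞ = 1 for all 1 ≤ i < n (i.e. (z_i) is a *-path) and |z_n − z_1|_∞ ≥ 40K. Then there exist indices 1 ≤ i_1 < i_2 < ⋯ < i_K ≤ n such that |z_{i_{k+1}} − z_{i_k}|_∞ ≤ 20 for all 1 ≤ k < K, and |z_{i_k} − z_{i_{k'}}|_∞ ≥ 10 for all k ≠ k'. -/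
/-- The greedy "stack" of selected times along the path: at each new time `t+1`,
if the current point is `ℓ∞`-far (≥ 10) from all stacked points, push `t+1`;
otherwise pop the stack down to the most recent stacked point that is close (≤ 9). -/
def stk (d : ℕ) (z : ℕ → Fin d → ℤ) : ℕ → List ℕ
  | 0 => [0]
  | (t+1) =>
    if (∀ l ∈ stk d z t, ∃ j, (10:ℤ) ≤ |z (t+1) j - z l j|)
    then (t+1) :: stk d z t
    else (stk d z t).dropWhile (fun l => decide (∃ j, (10:ℤ) ≤ |z (t+1) j - z l j|))

theorem dropWhile_head_false {α : Type*} (p : α → Bool) :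
    ∀ (l : List α) (a : α) (s' : List α), l.dropWhile p = a :: s' → p a = false := by
  intro l
  induction l with
  | nil => intro a s' h; simp [List.dropWhile] at h
  | cons x xs ih =>
    intro a s' h
    rw [List.dropWhile_cons] at h
    split_ifs at h with hp
    · exact ih a s' h
    · cases h
      simpa using hp

theorem stk_inv (d n : ℕ) (z : ℕ → Fin d → ℤ)
    (hstar : ∀ i, i + 1 < n → ∀ j, |z (i + 1) j - z i j| ≤ 1)
    (t : ℕ) (ht : t < n) :
    stk d z t ≠ [] ∧
    (stk d z t).getLast? = some 0 ∧
    (∀ a ∈ stk d z t, a ≤ t) ∧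
    (stk d z t).Chain' (fun a b => b < a) ∧
    (stk d z t).Chain' (fun a b => ∀ j, |z a j - z b j| ≤ 10) ∧
    (stk d z t).Pairwise (fun a b => ∃ j, (10:ℤ) ≤ |z a j - z b j|) ∧
    (∀ b ∈ (stk d z t).head?, ∀ j, |z t j - z b j| ≤ 9) := by
  induction t with
  | zero =>
    refine ⟨by simp [stk], by simp [stk], by simp [stk], by simp [stk]; exact List.isChain_singleton _, by simp [stk]; exact List.isChain_singleton _,
      by simp [stk], ?_⟩
    intro b hb j
    simp only [stk, List.head?_cons, Option.mem_def, Option.some.injEq] at hb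
    subst hb; simp
  | succ t ih =>
    obtain ⟨hne, hlast, hle, hdec, hcl, hpw, hhead⟩ := ih (by omega)
    by_cases hcond : (∀ l ∈ stk d z t, ∃ j, (10:ℤ) ≤ |z (t+1) j - z l j|)
    · have hs : stk d z (t+1) = (t+1) :: stk d z t := by rw [stk, if_pos hcond]
      rw [hs]
      obtain ⟨a, s', hs'⟩ := List.exists_cons_of_ne_nil hne
      refine ⟨by simp, ?_, ?_, ?_, ?_, ?_, ?_⟩
      · rw [hs', List.getLast?_cons_cons, ← hs']; exact hlast
      · intro b hb
        rcases List.mem_cons.mp hb with h | h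
        · omega
        · have := hle b h; omega
      · rw [List.Chain', List.isChain_cons]
        refine ⟨?_, hdec⟩
        intro y hy
        have : y ∈ stk d z t := by
          rw [hs'] at hy ⊢
          simp only [List.head?_cons, Option.mem_def, Option.some.injEq] at hy
          subst hy; exact List.mem_cons_self
        have := hle y this; omega
      · rw [List.Chain', List.isChain_cons]
        refine ⟨?_, hcl⟩
        intro y hy j
        have h9 := hhead y hy j
        have h1 := hstar t ht j
        have : |z (t+1) j - z y j| = |(z (t+1) j - z t j) + (z t j - z y j)| := by ring_nf
        rw [this]
        calc |(z (t+1) j - z t j) + (z t j - z y j)| ≤ |z (t+1) j - z t j| + |z t j - z y j| :=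
              abs_add_le _ _
          _ ≤ 10 := by omega
      · rw [List.pairwise_cons]
        exact ⟨fun b hb => hcond b hb, hpw⟩
      · intro b hb j
        simp only [List.head?_cons, Option.mem_def, Option.some.injEq] at hb
        subst hb; simp
    · have hs : stk d z (t+1) =
          (stk d z t).dropWhile (fun l => decide (∃ j, (10:ℤ) ≤ |z (t+1) j - z l j|)) := by
        rw [stk, if_neg hcond]
      push_neg at hcond
      obtain ⟨l₀, hl₀mem, hl₀⟩ := hcond
      have hsuf : stk d z (t+1) <:+ stk d z t := by rw [hs]; exact List.dropWhile_suffix _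
      have hne' : stk d z (t+1) ≠ [] := by
        rw [hs]
        intro hnil
        rw [List.dropWhile_eq_nil_iff] at hnil
        have := hnil l₀ hl₀mem
        simp only [decide_eq_true_eq] at this
        obtain ⟨j, hj⟩ := this
        have := hl₀ j
        omega
      refine ⟨hne', ?_, ?_, ?_, ?_, ?_, ?_⟩
      · obtain ⟨pre, hpre⟩ := hsuf
        have hsome : (stk d z (t+1)).getLast?.isSome := List.getLast?_isSome.mpr hne'
        obtain ⟨x, hx⟩ := Option.isSome_iff_exists.mp hsome
        rw [← hpre, List.getLast?_append, hx] at hlast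
        simp only [Option.some_or, Option.some.injEq] at hlast
        rw [hx, hlast]
      · intro a ha
        have := hle a (hsuf.mem ha); omega
      · exact hdec.suffix hsuf
      · exact hcl.suffix hsuf
      · exact hpw.sublist hsuf.sublist
      · intro b hb j
        obtain ⟨a, s', hA⟩ := List.exists_cons_of_ne_nil hne'
        have hb' : a = b := by
          rw [hA] at hb
          simpa using hb
        subst hb'
        have hA' : (stk d z t).dropWhile
            (fun l => decide (∃ j, (10:ℤ) ≤ |z (t+1) j - z l j|)) = a :: s' := by
          rw [← hs]; exact hA
        have hfalse := dropWhile_head_false _ _ _ _ hA'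
        simp only [decide_eq_false_iff_not] at hfalse
        push_neg at hfalse
        have := hfalse j
        omega

/-- telescoping the chain bound: the head of the stack is within `10*(len-1)` of `z 0`. -/
theorem chain_bound (d : ℕ) (z : ℕ → Fin d → ℤ) :
    ∀ (s : List ℕ), s ≠ [] → s.getLast? = some 0 →
      s.Chain' (fun a b => ∀ j, |z a j - z b j| ≤ 10) →
      ∀ b ∈ s.head?, ∀ j, |z b j - z 0 j| ≤ 10 * ((s.length : ℤ) - 1)
  | [] => by simp
  | [a] => by
    intro _ hlast _ b hb j
    simp only [List.getLast?_singleton, Option.some.injEq] at hlast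
    simp only [List.head?_cons, Option.mem_def, Option.some.injEq] at hb
    subst hlast; subst hb; simp
  | (a :: c :: s') => by
    intro _ hlast hchain b hb j
    simp only [List.head?_cons, Option.mem_def, Option.some.injEq] at hb
    subst hb
    rw [List.Chain', List.isChain_cons_cons] at hchain
    have ih := chain_bound d z (c :: s') (by simp) (by rw [← List.getLast?_cons_cons]; exact hlast)
      hchain.2 c (by simp) j
    have h10 := hchain.1 j
    have htri : |z a j - z 0 j| ≤ |z a j - z c j| + |z c j - z 0 j| := by
      have : z a j - z 0 j = (z a j - z c j) + (z c j - z 0 j) := by ring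
      rw [this]; exact abs_add_le _ _
    simp only [List.length_cons] at ih ⊢
    push_cast at ih ⊢
    omega

theorem stk_len_succ (d : ℕ) (z : ℕ → Fin d → ℤ) (t : ℕ) :
    (stk d z (t+1)).length ≤ (stk d z t).length + 1 := by
  rw [stk]
  split_ifs with h
  · simp
  · have := (List.dropWhile_suffix
      (fun l => decide (∃ j, (10:ℤ) ≤ |z (t+1) j - z l j|))).sublist.length_le
        (l₂ := stk d z t)
    omega

/-- discrete intermediate value theorem for ℕ-valued step functions -/
theorem nat_ivt (f : ℕ → ℕ) (h0 : f 0 = 1) (hstep : ∀ t, f (t+1) ≤ f t + 1)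
    (K : ℕ) (hK : 1 ≤ K) : ∀ N, K ≤ f N → ∃ t ≤ N, f t = K := by
  intro N
  induction N with
  | zero => intro h; exact ⟨0, le_refl 0, by omega⟩
  | succ N ih =>
    intro h
    by_cases h' : K ≤ f N
    · obtain ⟨t, ht, hft⟩ := ih h'
      exact ⟨t, by omega, hft⟩
    · have := hstep N
      exact ⟨N + 1, le_refl _, by omega⟩

/-- along a `*`-path whose endpoints are at `ℓ∞`-distance at least `40K`,
one can select `K` points, consecutive ones at `ℓ∞`-distance at most `20` and any two
distinct ones at `ℓ∞`-distance at least `10`. -/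
theorem select_spread_points_on_star_path (d K : ℕ) (hd : 1 ≤ d) (hK : 1 ≤ K)
    (n : ℕ) (hn : 1 ≤ n) (z : ℕ → Fin d → ℤ)
    (hstar : ∀ i, i + 1 < n →
      (∀ j, |z (i + 1) j - z i j| ≤ 1) ∧ (∃ j, |z (i + 1) j - z i j| = 1))
    (hfar : ∃ j, (40 * K : ℤ) ≤ |z (n - 1) j - z 0 j|) :
    ∃ f : ℕ → ℕ, (∀ k < K, f k < n) ∧
      (∀ k l, k < l → l < K → f k < f l) ∧
      (∀ k, k + 1 < K → ∀ j, |z (f (k + 1)) j - z (f k) j| ≤ 20) ∧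
      (∀ k l, k < K → l < K → k ≠ l → ∃ j, (10 : ℤ) ≤ |z (f k) j - z (f l) j|) := by
  have hstar' : ∀ i, i + 1 < n → ∀ j, |z (i + 1) j - z i j| ≤ 1 := fun i hi => (hstar i hi).1
  -- the stack at time n-1 has length ≥ K
  set N := n - 1 with hN
  have hNn : N < n := by omega
  obtain ⟨hne, hlast, hle, hdec, hcl, hpw, hhead⟩ := stk_inv d n z hstar' N hNn
  obtain ⟨j₀, hj₀⟩ := hfar
  obtain ⟨a₀, s₀, hs₀⟩ := List.exists_cons_of_ne_nil hne
  have hbound := chain_bound d z (stk d z N) hne hlast hcl a₀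
    (by rw [hs₀]; simp) j₀
  have hhead9 := hhead a₀ (by rw [hs₀]; simp) j₀
  have htri : |z N j₀ - z 0 j₀| ≤ |z N j₀ - z a₀ j₀| + |z a₀ j₀ - z 0 j₀| := by
    have : z N j₀ - z 0 j₀ = (z N j₀ - z a₀ j₀) + (z a₀ j₀ - z 0 j₀) := by ring
    rw [this]; exact abs_add_le _ _
  have hlenN : K ≤ (stk d z N).length := by
    by_contra hcon
    push_neg at hcon
    have hKlen : ((stk d z N).length : ℤ) ≤ K := by exact_mod_cast hcon.le
    have : (40 * K : ℤ) ≤ 9 + 10 * (((stk d z N).length : ℤ) - 1) := by omega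
    have hK1 : (1 : ℤ) ≤ (K : ℤ) := by exact_mod_cast hK
    nlinarith
  -- find a time where the stack has length exactly K
  have hivt := nat_ivt (fun t => (stk d z t).length) (by simp [stk])
    (fun t => stk_len_succ d z t) K hK N hlenN
  obtain ⟨T, hTN, hTlen⟩ := hivt
  obtain ⟨hne', hlast', hle', hdec', hcl', hpw', hhead'⟩ := stk_inv d n z hstar' T (by omega)
  set s := stk d z T with hsdef
  -- the selection function: reverse order of the stack
  refine ⟨fun k => s.getD (K - 1 - k) 0, ?_, ?_, ?_, ?_⟩
  · intro k hk
    have hidx : K - 1 - k < s.length := by omega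
    simp only [List.getD_eq_getElem s 0 hidx]
    have hmem : s[K-1-k] ∈ s := List.getElem_mem hidx
    have := hle' _ hmem
    omega
  · intro k l hkl hlK
    have hidxk : K - 1 - k < s.length := by omega
    have hidxl : K - 1 - l < s.length := by omega
    simp only [List.getD_eq_getElem s 0 hidxk, List.getD_eq_getElem s 0 hidxl]
    haveI : IsTrans ℕ (fun a b => b < a) := ⟨fun a b c h1 h2 => lt_trans h2 h1⟩
    have hpwdec := List.isChain_iff_pairwise.mp hdec'
    have := List.pairwise_iff_get.mp hpwdec ⟨K - 1 - l, hidxl⟩ ⟨K - 1 - k, hidxk⟩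
      (by simp only [Fin.mk_lt_mk]; omega)
    simpa using this
  · intro k hk1 j
    have hidx1 : K - 1 - (k + 1) < s.length - 1 := by omega
    have h10 := List.isChain_iff_getElem.mp hcl' (K - 1 - (k+1)) (by omega) j
    have heq : K - 1 - (k + 1) + 1 = K - 1 - k := by omega
    have hidxa : K - 1 - (k+1) < s.length := by omega
    have hidxb : K - 1 - k < s.length := by omega
    simp only [List.getD_eq_getElem s 0 hidxa, List.getD_eq_getElem s 0 hidxb]
    simp only [heq] at h10
    omega
  · intro k l hkK hlK hkl
    have hidxk : K - 1 - k < s.length := by omega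
    have hidxl : K - 1 - l < s.length := by omega
    simp only [List.getD_eq_getElem s 0 hidxk, List.getD_eq_getElem s 0 hidxl]
    rcases Nat.lt_or_ge k l with h | h
    · have := List.pairwise_iff_get.mp hpw' ⟨K - 1 - l, hidxl⟩ ⟨K - 1 - k, hidxk⟩
        (by simp only [Fin.mk_lt_mk]; omega)
      simp only [List.get_eq_getElem] at this
      obtain ⟨j, hj⟩ := this
      exact ⟨j, by rw [abs_sub_comm] at hj; exact hj⟩
    · have hlk : l < k := by omega
      have := List.pairwise_iff_get.mp hpw' ⟨K - 1 - k, hidxk⟩ ⟨K - 1 - l, hidxl⟩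
        (by simp only [Fin.mk_lt_mk]; omega)
      simp only [List.get_eq_getElem] at this
      exact this
end
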